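/- Let p ≥ 1711 be a prime with −1 a residue and 2, 3 non-residues mod p, and a, b ∈ R' = R \ {(p+3)/2,(p−3)/2} with 4a ≠ b. Then there exist distinct α, β, γ ∈ R' such that 2a = α + β and 2β = γ + b. -/

import Mathlib

open Finset

section Helpers
variable (p : ℕ) [Fact p.Prime]

private lemma chi_tri (x : ZMod p) :
    quadraticChar (ZMod p) x = 1 ∨ quadraticChar (ZMod p) x = 0 ∨
      quadraticChar (ZMod p) x = -1 := by
  by_cases hx : x = 0
  · simp [hx, quadraticChar_zero]
  · rcases quadraticChar_dichotomy hx with h | h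
    · exact Or.inl h
    · exact Or.inr (Or.inr h)

private lemma sum_shift (hp2 : ringChar (ZMod p) ≠ 2) (x : ZMod p) :
    ∑ β : ZMod p, quadraticChar (ZMod p) (β - x) = 0 := by
  rw [← Equiv.sum_comp (Equiv.addLeft x) (fun β => quadraticChar (ZMod p) (β - x))]
  simp only [Equiv.coe_addLeft, add_sub_cancel_left]
  exact quadraticChar_sum_zero hp2

private lemma sum_prod (hp2 : ringChar (ZMod p) ≠ 2) {u v : ZMod p} (huv : u ≠ v) :
    ∑ β : ZMod p, quadraticChar (ZMod p) (β - u) * quadraticChar (ZMod p) (β - v) = -1 := by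
  set χ := quadraticChar (ZMod p) with hχ
  have hd : v - u ≠ 0 := sub_ne_zero.mpr (Ne.symm huv)
  have key : ∀ t : ZMod p, χ t * χ (t - 1) = χ (u + (v-u)*t - u) * χ (u + (v-u)*t - v) := by
    intro t
    have h1 : u + (v-u)*t - u = (v-u)*t := by ring
    have h2 : u + (v-u)*t - v = (v-u)*(t-1) := by ring
    rw [h1, h2, map_mul, map_mul, mul_mul_mul_comm, ← map_mul, ← sq,
      (quadraticChar_sq_one hd : χ (v - u) ^ 2 = 1), one_mul]
  have e : ZMod p ≃ ZMod p := (Equiv.mulLeft₀ (v-u) hd).trans (Equiv.addLeft u)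
  have step1 : ∑ t : ZMod p, χ t * χ (t - 1) = ∑ β : ZMod p, χ (β - u) * χ (β - v) := by
    refine Fintype.sum_equiv ((Equiv.mulLeft₀ (v-u) hd).trans (Equiv.addLeft u)) _ _ ?_
    intro t
    simpa using key t
  rw [← step1]
  have step2 : ∀ t : ZMod p, χ t * χ (t - 1) = χ (-1) * (χ t * χ (1 - t)) := by
    intro t
    have h : t - 1 = -1 * (1 - t) := by ring
    rw [h, map_mul]; ring
  rw [Finset.sum_congr rfl (fun t _ => step2 t), ← Finset.mul_sum]
  have hj : ∑ t : ZMod p, χ t * χ (1 - t) = jacobiSum χ χ := rfl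
  have hinv : jacobiSum χ χ = - χ (-1) := by
    have h₁ : χ⁻¹ = χ := (quadraticChar_isQuadratic (ZMod p)).inv
    calc jacobiSum χ χ = jacobiSum χ χ⁻¹ := by rw [h₁]
      _ = - χ (-1) := jacobiSum_nontrivial_inv (quadraticChar_ne_one hp2)
  rw [hj, hinv]
  have hm : χ (-1) * χ (-1) = 1 := by
    rw [← map_mul]
    norm_num
  linarith [hm]

end Helpers

section Final
variable (p : ℕ) [Fact p.Prime]

private lemma prod2_ge (x y : ZMod p) :
    -1 ≤ quadraticChar (ZMod p) x * quadraticChar (ZMod p) y := by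
  rcases chi_tri p x with h | h | h <;> rcases chi_tri p y with h' | h' | h' <;>
    rw [h, h'] <;> norm_num

private lemma prod3_nonpos (x y z : ZMod p)
    (h : quadraticChar (ZMod p) x * quadraticChar (ZMod p) y * quadraticChar (ZMod p) z ≠ 1) :
    quadraticChar (ZMod p) x * quadraticChar (ZMod p) y * quadraticChar (ZMod p) z ≤ 0 := by
  rcases chi_tri p x with h1 | h1 | h1 <;> rcases chi_tri p y with h2 | h2 | h2 <;>
    rcases chi_tri p z with h3 | h3 | h3 <;> rw [h1, h2, h3] at h ⊢ <;> revert h <;> norm_num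

private lemma final_contradiction (hp : 1711 ≤ p) (hp2 : ringChar (ZMod p) ≠ 2)
    (hχ1 : quadraticChar (ZMod p) (-1) = 1)
    (u v w : ZMod p) (hs : u + v - 2*w ≠ 0)
    (hcard : (Finset.univ.filter (fun β : ZMod p =>
      quadraticChar (ZMod p) (β - u) * quadraticChar (ZMod p) (β - v) *
        quadraticChar (ZMod p) (β - w) ≠ 1)).card ≤ 95) : False := by
  set χ := quadraticChar (ZMod p) with hχdef
  set s : ZMod p := u + v - 2*w with hsdef
  set Bad : Finset (ZMod p) :=
    Finset.univ.filter (fun β : ZMod p => χ (β - u) * χ (β - v) * χ (β - w) ≠ 1) with hBdef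
  -- the basic character sum
  have hsum : ∑ t : ZMod p, χ t * χ (t - s) = -1 := by
    have := sum_prod p hp2 (show (0 : ZMod p) ≠ s from fun h => hs h.symm)
    simpa [hχdef] using this
  -- bad set for t
  set BadT : Finset (ZMod p) :=
    Finset.univ.filter (fun t : ZMod p => (w + t) ∈ Bad ∨ (w + s - t) ∈ Bad) with hBTdef
  have hBTcard : BadT.card ≤ 190 := by
    have hsub : BadT ⊆ Bad.image (fun β => β - w) ∪ Bad.image (fun β => w + s - β) := by
      intro t ht
      rw [hBTdef, Finset.mem_filter] at ht
      rcases ht.2 with h | h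
      · apply Finset.mem_union_left
        refine Finset.mem_image.mpr ⟨w + t, h, by ring⟩
      · apply Finset.mem_union_right
        refine Finset.mem_image.mpr ⟨w + s - t, h, by ring⟩
    calc BadT.card ≤ _ := Finset.card_le_card hsub
      _ ≤ (Bad.image (fun β => β - w)).card + (Bad.image (fun β => w + s - β)).card :=
          Finset.card_union_le _ _
      _ ≤ Bad.card + Bad.card := add_le_add Finset.card_image_le Finset.card_image_le
      _ ≤ 190 := by omega
  -- good t have term 1
  have hgood : ∀ t : ZMod p, t ∉ BadT → χ t * χ (t - s) = 1 := by
    intro t ht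
    rw [hBTdef, Finset.mem_filter, not_and, not_or] at ht
    obtain ⟨h1, h2⟩ := ht (Finset.mem_univ t)
    rw [hBdef, Finset.mem_filter, not_and, not_not] at h1 h2
    have e1 := h1 (Finset.mem_univ _)
    have e2 := h2 (Finset.mem_univ _)
    rw [show w + t - w = t from by ring] at e1
    rw [show w + s - t - w = s - t from by ring] at e2
    rw [show w + s - t - u = -1 * (w + t - v) from by rw [hsdef]; ring,
      show w + s - t - v = -1 * (w + t - u) from by rw [hsdef]; ring,
      map_mul, map_mul, hχ1, one_mul, one_mul] at e2
    -- e1 : χ (w+t-u) * χ (w+t-v) * χ t = 1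
    -- e2 : χ (w+t-v) * χ (w+t-u) * χ (s-t) = 1
    have e1' : (χ (w+t-u) * χ (w+t-v)) * χ t = 1 := e1
    have e2' : (χ (w+t-u) * χ (w+t-v)) * χ (s - t) = 1 := by
      rw [mul_comm (χ (w+t-u)) (χ (w+t-v))]; exact e2
    have hts : χ (t - s) = χ (s - t) := by
      rw [show t - s = -1 * (s - t) from by ring, map_mul, hχ1, one_mul]
    rcases Int.mul_eq_one_iff_eq_one_or_neg_one.mp e1' with ⟨hM, hX⟩ | ⟨hM, hX⟩ <;>
      rw [hM] at e2' <;> rw [hts, hX] <;> omega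
  -- conclude
  have hsplit := Finset.sum_filter_add_sum_filter_not Finset.univ
    (fun t : ZMod p => (w + t) ∈ Bad ∨ (w + s - t) ∈ Bad) (fun t => χ t * χ (t - s))
  have hgoodsum : ∑ t ∈ Finset.univ.filter
      (fun t : ZMod p => ¬((w + t) ∈ Bad ∨ (w + s - t) ∈ Bad)), χ t * χ (t - s)
      = (Finset.univ.filter
      (fun t : ZMod p => ¬((w + t) ∈ Bad ∨ (w + s - t) ∈ Bad))).card := by
    rw [Finset.sum_congr rfl (fun t ht => hgood t (by
      rw [hBTdef, Finset.mem_filter]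
      rw [Finset.mem_filter] at ht
      exact fun hc => ht.2 hc.2))]
    simp
  have hcards := Finset.card_filter_add_card_filter_not
    (s := (Finset.univ : Finset (ZMod p)))
    (p := fun t : ZMod p => (w + t) ∈ Bad ∨ (w + s - t) ∈ Bad)
  rw [Finset.card_univ, ZMod.card] at hcards
  have hbadsum : -(190 : ℤ) ≤ ∑ t ∈ Finset.univ.filter
      (fun t : ZMod p => (w + t) ∈ Bad ∨ (w + s - t) ∈ Bad), χ t * χ (t - s) := by
    have h1 : (Finset.univ.filter
        (fun t : ZMod p => (w + t) ∈ Bad ∨ (w + s - t) ∈ Bad)).card • (-1 : ℤ)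
        ≤ ∑ t ∈ Finset.univ.filter
        (fun t : ZMod p => (w + t) ∈ Bad ∨ (w + s - t) ∈ Bad), χ t * χ (t - s) :=
      Finset.card_nsmul_le_sum _ _ _ (fun x _ => prod2_ge p x (x - s))
    have h2 : (Finset.univ.filter
        (fun t : ZMod p => (w + t) ∈ Bad ∨ (w + s - t) ∈ Bad)).card ≤ 190 := hBTcard
    rw [nsmul_eq_mul] at h1
    have : -(190:ℤ) ≤ -((Finset.univ.filter
        (fun t : ZMod p => (w + t) ∈ Bad ∨ (w + s - t) ∈ Bad)).card : ℤ) := by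
      omega
    linarith
  -- combine
  rw [hsum, hgoodsum] at hsplit
  have h189 : ((Finset.univ.filter
      (fun t : ZMod p => ¬((w + t) ∈ Bad ∨ (w + s - t) ∈ Bad))).card : ℤ) ≤ 189 := by
    linarith
  have h189' : (Finset.univ.filter
      (fun t : ZMod p => ¬((w + t) ∈ Bad ∨ (w + s - t) ∈ Bad))).card ≤ 189 := by
    exact_mod_cast h189
  have hBT190 : (Finset.univ.filter
      (fun t : ZMod p => (w + t) ∈ Bad ∨ (w + s - t) ∈ Bad)).card ≤ 190 := hBTcard
  omega

private lemma q_bound (x y z : ZMod p) :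
    (1 + quadraticChar (ZMod p) x) * (1 + quadraticChar (ZMod p) y) *
      (1 - quadraticChar (ZMod p) z) ≤ 8 := by
  rcases chi_tri p x with h1 | h1 | h1 <;> rcases chi_tri p y with h2 | h2 | h2 <;>
    rcases chi_tri p z with h3 | h3 | h3 <;> rw [h1, h2, h3] <;> norm_num

end Final

/-- `a` is a (nonzero) quadratic residue in `ZMod p`. -/
def IsQR (p : ℕ) (a : ZMod p) : Prop := a ≠ 0 ∧ IsSquare a

/-- `R' = R \ {(p+3)/2, (p-3)/2}`: the quadratic residues with two elements removed. -/
def Rp' (p : ℕ) : Set (ZMod p) :=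
  {a | IsQR p a ∧ a ≠ (((p + 3) / 2 : ℕ) : ZMod p) ∧ a ≠ (((p - 3) / 2 : ℕ) : ZMod p)}

theorem stmt_16 (p : ℕ) [Fact p.Prime] (hp : 1711 ≤ p)
    (h1 : IsQR p (-1)) (h2 : ¬ IsQR p 2) (h3 : ¬ IsQR p 3)
    (a b : ZMod p) (ha : a ∈ Rp' p) (hb : b ∈ Rp' p) (hab : 4 * a ≠ b) :
    ∃ α β γ : ZMod p, α ≠ β ∧ α ≠ γ ∧ β ≠ γ ∧
      α ∈ Rp' p ∧ β ∈ Rp' p ∧ γ ∈ Rp' p ∧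
      2 * a = α + β ∧ 2 * β = γ + b := by
  have hp2 : ringChar (ZMod p) ≠ 2 := by rw [ZMod.ringChar_zmod_n]; omega
  set χ := quadraticChar (ZMod p) with hχdef
  -- basic nonzero facts
  have hne2 : (2 : ZMod p) ≠ 0 := by
    intro h
    have h' : ((2 : ℕ) : ZMod p) = 0 := by exact_mod_cast h
    have := (ZMod.natCast_eq_zero_iff 2 p).mp h'
    have := Nat.le_of_dvd (by norm_num) this
    omega
  have hne3 : (3 : ZMod p) ≠ 0 := by
    intro h
    have h' : ((3 : ℕ) : ZMod p) = 0 := by exact_mod_cast h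
    have := (ZMod.natCast_eq_zero_iff 3 p).mp h'
    have := Nat.le_of_dvd (by norm_num) this
    omega
  obtain ⟨⟨ha0, hasq⟩, hac1, hac2⟩ := ha
  obtain ⟨⟨hb0, hbsq⟩, hbc1, hbc2⟩ := hb
  obtain ⟨hm0, hmsq⟩ := h1
  have hχ1 : χ (-1) = 1 := (quadraticChar_one_iff_isSquare hm0).mpr hmsq
  have hχ2 : χ 2 = -1 := quadraticChar_neg_one_iff_not_isSquare.mpr (fun hsq => h2 ⟨hne2, hsq⟩)
  set A : ZMod p := 2 * a with hAdef
  set C : ZMod p := b / 2 with hCdef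
  have h2C : 2 * C = b := by
    rw [hCdef, mul_comm]
    exact div_mul_cancel₀ b hne2
  have hA0 : A ≠ 0 := mul_ne_zero hne2 ha0
  have hC0 : C ≠ 0 := div_ne_zero hb0 hne2
  have hAC : A ≠ C := by
    intro h
    apply hab
    have : 4 * a = 2 * C := by rw [← h, hAdef]; ring
    rw [h2C] at this
    exact this
  set c₁ : ZMod p := (((p + 3) / 2 : ℕ) : ZMod p) with hc1def
  set c₂ : ZMod p := (((p - 3) / 2 : ℕ) : ZMod p) with hc2def
  set Bad0 : Finset (ZMod p) :=
    ([0, A, C, a, b, (2*a+b)/3, c₁, c₂, A - c₁, A - c₂, (b+c₁)/2, (b+c₂)/2] :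
      List (ZMod p)).toFinset with hB0def
  have hB0card : Bad0.card ≤ 12 := (List.toFinset_card_le _)
  -- main existence claim
  suffices hβ : ∃ β : ZMod p, β ∉ Bad0 ∧ χ β = 1 ∧ χ (β - A) = 1 ∧ χ (β - C) = -1 by
    obtain ⟨β, hβB, hβ1, hβ2, hβ3⟩ := hβ
    rw [hB0def, List.mem_toFinset] at hβB
    simp only [List.mem_cons, List.not_mem_nil, or_false, not_or] at hβB
    obtain ⟨hβ0, hβA, hβC, hβa, hβb, hβ3e, hβc1, hβc2, hβAc1, hβAc2, hβg1, hβg2⟩ := hβB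
    refine ⟨2*a - β, β, 2*β - b, ?_, ?_, ?_, ?_, ?_, ?_, by ring, by ring⟩
    · -- α ≠ β
      intro h
      apply hβa
      exact mul_left_cancel₀ hne2 (show (2:ZMod p) * β = 2 * a by linear_combination -h)
    · -- α ≠ γ
      intro h
      apply hβ3e
      rw [eq_div_iff hne3]
      linear_combination -h
    · -- β ≠ γ
      intro h
      exact hβb (by linear_combination -h)
    · -- α ∈ Rp'
      have hχα : χ (2*a - β) = 1 := by
        rw [show 2*a - β = -1 * (β - A) from by rw [hAdef]; ring, map_mul, hχ1, one_mul]
        exact hβ2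
      have hα0 : 2*a - β ≠ 0 := by
        intro h
        rw [h] at hχα
        rw [show χ 0 = 0 from quadraticChar_zero] at hχα
        norm_num at hχα
      refine ⟨⟨hα0, (quadraticChar_one_iff_isSquare hα0).mp hχα⟩, ?_, ?_⟩
      · intro h; exact hβAc1 (by rw [hAdef]; linear_combination -h)
      · intro h; exact hβAc2 (by rw [hAdef]; linear_combination -h)
    · -- β ∈ Rp'
      have hβ0' : β ≠ 0 := hβ0
      exact ⟨⟨hβ0', (quadraticChar_one_iff_isSquare hβ0').mp hβ1⟩, hβc1, hβc2⟩
    · -- γ ∈ Rp'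
      have hχγ : χ (2*β - b) = 1 := by
        rw [show 2*β - b = 2 * (β - C) from by rw [← h2C]; ring, map_mul, hχ2, hβ3]
        norm_num
      have hγ0 : 2*β - b ≠ 0 := by
        intro h
        rw [h] at hχγ
        rw [show χ 0 = 0 from quadraticChar_zero] at hχγ
        norm_num at hχγ
      refine ⟨⟨hγ0, (quadraticChar_one_iff_isSquare hγ0).mp hχγ⟩, ?_, ?_⟩
      · intro h; apply hβg1; rw [eq_div_iff hne2]; linear_combination h
      · intro h; apply hβg2; rw [eq_div_iff hne2]; linear_combination h
  -- now prove the existence by contradiction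
  by_contra hno
  push_neg at hno
  -- hno : ∀ β, β ∉ Bad0 → χ β = 1 → χ (β - A) = 1 → χ (β - C) ≠ -1
  have key0 : ∀ β : ZMod p, β ∉ Bad0 →
      (1 + χ β) * (1 + χ (β - A)) * (1 - χ (β - C)) = 0 := by
    intro β hβ
    have hβl := hβ
    rw [hB0def, List.mem_toFinset] at hβl
    simp only [List.mem_cons, List.not_mem_nil, or_false, not_or] at hβl
    obtain ⟨hβ0, hβA, hβC, -⟩ := hβl
    rcases quadraticChar_dichotomy (show β ≠ 0 from hβ0) with h1 | h1
    · rcases quadraticChar_dichotomy (sub_ne_zero.mpr hβA) with h2 | h2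
      · rcases quadraticChar_dichotomy (sub_ne_zero.mpr hβC) with h3 | h3
        · rw [(h3 : χ (β - C) = 1)]; ring
        · exact absurd (h3 : χ (β - C) = -1) (hno β hβ h1 h2)
      · rw [(h2 : χ (β - A) = -1)]; ring
    · rw [(h1 : χ β = -1)]; ring
  have hsumq : ∑ β : ZMod p, (1 + χ β) * (1 + χ (β - A)) * (1 - χ (β - C))
      = (p : ℤ) + 1 - ∑ β : ZMod p, χ β * χ (β - A) * χ (β - C) := by
    have expand : ∀ β : ZMod p, (1 + χ β) * (1 + χ (β - A)) * (1 - χ (β - C)) =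
        1 + χ β + χ (β - A) - χ (β - C) + χ β * χ (β - A) - χ β * χ (β - C)
          - χ (β - A) * χ (β - C) - χ β * χ (β - A) * χ (β - C) := fun β => by ring
    rw [Finset.sum_congr rfl (fun β _ => expand β)]
    simp only [Finset.sum_add_distrib, Finset.sum_sub_distrib]
    have e0 : ∑ _β : ZMod p, (1:ℤ) = p := by simp [Finset.card_univ, ZMod.card]
    have e1 : ∑ β : ZMod p, χ β = 0 := by
      have := sum_shift p hp2 0
      simpa [hχdef] using this
    have e2 : ∑ β : ZMod p, χ (β - A) = 0 := sum_shift p hp2 A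
    have e3 : ∑ β : ZMod p, χ (β - C) = 0 := sum_shift p hp2 C
    have e4 : ∑ β : ZMod p, χ β * χ (β - A) = -1 := by
      have := sum_prod p hp2 (show (0:ZMod p) ≠ A from (Ne.symm hA0))
      simpa [hχdef] using this
    have e5 : ∑ β : ZMod p, χ β * χ (β - C) = -1 := by
      have := sum_prod p hp2 (show (0:ZMod p) ≠ C from (Ne.symm hC0))
      simpa [hχdef] using this
    have e6 : ∑ β : ZMod p, χ (β - A) * χ (β - C) = -1 := sum_prod p hp2 hAC
    rw [e0, e1, e2, e3, e4, e5, e6]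
    ring
  have hsumle : ∑ β : ZMod p, (1 + χ β) * (1 + χ (β - A)) * (1 - χ (β - C)) ≤ 96 := by
    rw [← Finset.sum_subset (Finset.subset_univ Bad0) (fun x _ hx => key0 x hx)]
    have h8 : ∑ β ∈ Bad0, (1 + χ β) * (1 + χ (β - A)) * (1 - χ (β - C))
        ≤ Bad0.card • (8:ℤ) :=
      Finset.sum_le_card_nsmul _ _ _ (fun x _ => q_bound p x (x-A) (x-C))
    rw [nsmul_eq_mul] at h8
    have : (Bad0.card : ℤ) ≤ 12 := by exact_mod_cast hB0card
    linarith
  have hS : (p : ℤ) - 95 ≤ ∑ β : ZMod p, χ β * χ (β - A) * χ (β - C) := by linarith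
  -- bound the bad set
  have hsplit := Finset.sum_filter_add_sum_filter_not Finset.univ
    (fun β : ZMod p => χ β * χ (β - A) * χ (β - C) ≠ 1)
    (fun β => χ β * χ (β - A) * χ (β - C))
  have hbadle : ∑ β ∈ Finset.univ.filter
      (fun β : ZMod p => χ β * χ (β - A) * χ (β - C) ≠ 1),
      χ β * χ (β - A) * χ (β - C) ≤ 0 := by
    apply Finset.sum_nonpos
    intro x hx
    rw [Finset.mem_filter] at hx
    exact prod3_nonpos p x (x - A) (x - C) hx.2
  have hgoodsum : ∑ β ∈ Finset.univ.filter
      (fun β : ZMod p => ¬(χ β * χ (β - A) * χ (β - C) ≠ 1)),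
      χ β * χ (β - A) * χ (β - C)
      = ((Finset.univ.filter
      (fun β : ZMod p => ¬(χ β * χ (β - A) * χ (β - C) ≠ 1))).card : ℤ) := by
    rw [Finset.sum_congr rfl (fun x hx => not_not.mp (Finset.mem_filter.mp hx).2)]
    simp
  have hcards := Finset.card_filter_add_card_filter_not
    (s := (Finset.univ : Finset (ZMod p)))
    (p := fun β : ZMod p => χ β * χ (β - A) * χ (β - C) ≠ 1)
  rw [Finset.card_univ, ZMod.card] at hcards
  have hBadcard : (Finset.univ.filter
      (fun β : ZMod p => χ β * χ (β - A) * χ (β - C) ≠ 1)).card ≤ 95 := by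
    rw [hgoodsum] at hsplit
    have h1 : ((Finset.univ.filter
        (fun β : ZMod p => ¬(χ β * χ (β - A) * χ (β - C) ≠ 1))).card : ℤ)
        ≥ (p:ℤ) - 95 := by linarith
    have h2 : p - 95 ≤ (Finset.univ.filter
        (fun β : ZMod p => ¬(χ β * χ (β - A) * χ (β - C) ≠ 1))).card := by
      zify [show 95 ≤ p from by omega]
      linarith
    omega
  -- apply the final contradiction, choosing a good reflection point
  by_cases hs3 : (0:ZMod p) + A - 2*C = 0
  · have hs2 : (0:ZMod p) + C - 2*A ≠ 0 := by
      intro h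
      apply hA0
      have hA2C : A = 2*C := by linear_combination hs3
      have hC2A : C = 2*A := by linear_combination h
      have : (3:ZMod p) * A = 0 := by linear_combination -hA2C - 2*hC2A
      exact (mul_eq_zero.mp this).resolve_left hne3
    refine final_contradiction p hp hp2 hχ1 0 C A hs2 ?_
    have heq : Finset.univ.filter (fun β : ZMod p =>
        quadraticChar (ZMod p) (β - 0) * quadraticChar (ZMod p) (β - C) *
          quadraticChar (ZMod p) (β - A) ≠ 1)
        = Finset.univ.filter
        (fun β : ZMod p => χ β * χ (β - A) * χ (β - C) ≠ 1) := by
      apply Finset.filter_congr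
      intro x _
      rw [sub_zero, mul_right_comm]
    rw [heq]
    exact hBadcard
  · refine final_contradiction p hp hp2 hχ1 0 A C hs3 ?_
    have heq : Finset.univ.filter (fun β : ZMod p =>
        quadraticChar (ZMod p) (β - 0) * quadraticChar (ZMod p) (β - A) *
          quadraticChar (ZMod p) (β - C) ≠ 1)
        = Finset.univ.filter
        (fun β : ZMod p => χ β * χ (β - A) * χ (β - C) ≠ 1) := by
      apply Finset.filter_congr
      intro x _
      rw [sub_zero]
    rw [heq]
    exact hBadcard
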